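/- If 2π ≤ δ ≤ T/10, then the phase estimation amplitude α with |α| = (√2|cos(δ/2)|/T)·|2 cos(δ/(2T)) sin(π/(2T))|/|sin((δ+π)/(2T)) sin((δ−π)/(2T))| satisfies |α| ≤ 8π/δ², and hence |α|² ≤ 64π²/δ⁴. -/

import Mathlib

open Real

set_option maxHeartbeats 1000000

theorem hhl_phase_estimation_amplitude_bound (T : ℕ) (hT : 1 ≤ T) (δ : ℝ)
    (hδ1 : 2 * Real.pi ≤ δ) (hδ2 : δ ≤ (T : ℝ) / 10) :
    Real.sqrt 2 * |Real.cos (δ / 2)| / (T : ℝ) *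
        |2 * Real.cos (δ / (2 * (T : ℝ))) * Real.sin (Real.pi / (2 * (T : ℝ)))| /
        |Real.sin ((δ + Real.pi) / (2 * (T : ℝ))) *
          Real.sin ((δ - Real.pi) / (2 * (T : ℝ)))| ≤ 8 * Real.pi / δ ^ 2 ∧
    (Real.sqrt 2 * |Real.cos (δ / 2)| / (T : ℝ) *
        |2 * Real.cos (δ / (2 * (T : ℝ))) * Real.sin (Real.pi / (2 * (T : ℝ)))| /
        |Real.sin ((δ + Real.pi) / (2 * (T : ℝ))) *
          Real.sin ((δ - Real.pi) / (2 * (T : ℝ)))|) ^ 2 ≤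
      64 * Real.pi ^ 2 / δ ^ 4 := by
  have hπ := Real.pi_pos
  set t := (T : ℝ) with ht_def
  have ht1 : (1:ℝ) ≤ t := by rw [ht_def]; exact_mod_cast hT
  have hδpos : 0 < δ := by linarith
  have ht : 20 * Real.pi ≤ t := by nlinarith
  have htpos : 0 < t := by linarith
  -- key sine lower bound
  have key : ∀ x : ℝ, 0 < x → x ≤ 3/40 → (159/160) * x ≤ Real.sin x := by
    intro x hx hx'
    have h1 : x - x ^ 3 / 4 < Real.sin x := lt_of_le_of_lt (by nlinarith [pow_pos hx 3]) (Real.sin_gt_sub_cube hx)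
    have hx2 : x ^ 2 ≤ 9 / 1600 := by nlinarith
    nlinarith [mul_le_mul_of_nonneg_left hx2 hx.le]
  have hx1pos : 0 < (δ + Real.pi) / (2 * t) := by positivity
  have hx1le : (δ + Real.pi) / (2 * t) ≤ 3 / 40 := by
    rw [div_le_iff₀ (by positivity)]; nlinarith
  have hx2pos : 0 < (δ - Real.pi) / (2 * t) := by
    apply div_pos (by linarith) (by positivity)
  have hx2le : (δ - Real.pi) / (2 * t) ≤ 3 / 40 := by
    rw [div_le_iff₀ (by positivity)]; nlinarith
  have hs1 := key _ hx1pos hx1le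
  have hs2 := key _ hx2pos hx2le
  have hsin1pos : 0 < Real.sin ((δ + Real.pi) / (2 * t)) :=
    lt_of_lt_of_le (by positivity) hs1
  have hsin2pos : 0 < Real.sin ((δ - Real.pi) / (2 * t)) :=
    lt_of_lt_of_le (by positivity) hs2
  -- denominator lower bound
  have hD : 3 / 4 * (159 / 160) ^ 2 * δ ^ 2 / (4 * t ^ 2) ≤
      |Real.sin ((δ + Real.pi) / (2 * t)) * Real.sin ((δ - Real.pi) / (2 * t))| := by
    rw [abs_of_pos (mul_pos hsin1pos hsin2pos)]
    have hmul : (159/160) * ((δ + Real.pi) / (2 * t)) * ((159/160) * ((δ - Real.pi) / (2 * t))) ≤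
        Real.sin ((δ + Real.pi) / (2 * t)) * Real.sin ((δ - Real.pi) / (2 * t)) :=
      mul_le_mul hs1 hs2 (by positivity) hsin1pos.le
    have hx : 3 / 4 * δ ^ 2 / (4 * t ^ 2) ≤
        ((δ + Real.pi) / (2 * t)) * ((δ - Real.pi) / (2 * t)) := by
      rw [div_mul_div_comm, div_le_div_iff₀ (by positivity) (by positivity)]
      nlinarith [mul_nonneg (mul_nonneg (sub_nonneg.mpr hδ1)
        (by positivity : (0:ℝ) ≤ δ + 2 * Real.pi)) (sq_nonneg t)]
    calc 3 / 4 * (159 / 160) ^ 2 * δ ^ 2 / (4 * t ^ 2)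
        = (159/160) ^ 2 * (3 / 4 * δ ^ 2 / (4 * t ^ 2)) := by ring
      _ ≤ (159/160) ^ 2 * ((δ + Real.pi) / (2 * t) * ((δ - Real.pi) / (2 * t))) :=
          mul_le_mul_of_nonneg_left hx (by norm_num)
      _ = (159/160) * ((δ + Real.pi) / (2 * t)) * ((159/160) * ((δ - Real.pi) / (2 * t))) := by
          ring
      _ ≤ _ := hmul
  have hDpos : 0 < 3 / 4 * (159 / 160) ^ 2 * δ ^ 2 / (4 * t ^ 2) := by positivity
  -- numerator upper bound
  have hsqrt2 : Real.sqrt 2 ≤ 71 / 50 := by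
    nlinarith [Real.sq_sqrt (by norm_num : (0:ℝ) ≤ 2), Real.sqrt_nonneg 2]
  have hsinπpos : 0 < Real.sin (Real.pi / (2 * t)) := by
    have h := key (Real.pi / (2 * t)) (by positivity)
      (by rw [div_le_iff₀ (by positivity)]; nlinarith)
    have : (0:ℝ) < (159/160) * (Real.pi / (2 * t)) := by positivity
    linarith
  have hsinπle : Real.sin (Real.pi / (2 * t)) ≤ Real.pi / (2 * t) :=
    le_of_lt (Real.sin_lt (by positivity))
  have hc1 : |Real.cos (δ / 2)| ≤ 1 := Real.abs_cos_le_one _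
  have hc2 : |Real.cos (δ / (2 * t))| ≤ 1 := Real.abs_cos_le_one _
  have habs2 : |2 * Real.cos (δ / (2 * t)) * Real.sin (Real.pi / (2 * t))| ≤ Real.pi / t := by
    rw [abs_mul, abs_mul, abs_two, abs_of_pos hsinπpos]
    have h1 : 2 * |Real.cos (δ / (2 * t))| * Real.sin (Real.pi / (2 * t)) ≤
        2 * 1 * (Real.pi / (2 * t)) :=
      mul_le_mul (by nlinarith [abs_nonneg (Real.cos (δ / (2*t)))]) hsinπle
        hsinπpos.le (by norm_num)
    calc 2 * |Real.cos (δ / (2 * t))| * Real.sin (Real.pi / (2 * t)) ≤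
        2 * 1 * (Real.pi / (2 * t)) := h1
      _ = Real.pi / t := by field_simp
  have hN : Real.sqrt 2 * |Real.cos (δ / 2)| / t *
      |2 * Real.cos (δ / (2 * t)) * Real.sin (Real.pi / (2 * t))| ≤
      71 / 50 * Real.pi / t ^ 2 := by
    have h0 : Real.sqrt 2 * |Real.cos (δ / 2)| ≤ 71 / 50 := by
      nlinarith [Real.sqrt_nonneg 2, abs_nonneg (Real.cos (δ / 2))]
    calc Real.sqrt 2 * |Real.cos (δ / 2)| / t *
        |2 * Real.cos (δ / (2 * t)) * Real.sin (Real.pi / (2 * t))| ≤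
        71 / 50 / t * (Real.pi / t) :=
          mul_le_mul ((div_le_div_iff_of_pos_right htpos).mpr h0) habs2 (abs_nonneg _) (by positivity)
      _ = 71 / 50 * Real.pi / t ^ 2 := by ring
  have hmain : Real.sqrt 2 * |Real.cos (δ / 2)| / t *
      |2 * Real.cos (δ / (2 * t)) * Real.sin (Real.pi / (2 * t))| /
      |Real.sin ((δ + Real.pi) / (2 * t)) * Real.sin ((δ - Real.pi) / (2 * t))| ≤
      8 * Real.pi / δ ^ 2 := by
    have step1 := div_le_div₀ (by positivity : (0:ℝ) ≤ 71 / 50 * Real.pi / t ^ 2) hN hDpos hD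
    refine step1.trans ?_
    have hδne : δ ≠ 0 := hδpos.ne'
    have htne : t ≠ 0 := htpos.ne'
    have heq : 71 / 50 * Real.pi / t ^ 2 / (3 / 4 * (159 / 160) ^ 2 * δ ^ 2 / (4 * t ^ 2)) =
        (29081600 / 3792150) * (Real.pi / δ ^ 2) := by
      field_simp
      ring
    rw [heq, show 8 * Real.pi / δ ^ 2 = 8 * (Real.pi / δ ^ 2) by ring]
    have hpd : (0:ℝ) ≤ Real.pi / δ ^ 2 := by positivity
    exact mul_le_mul_of_nonneg_right (by norm_num) hpd
  refine ⟨hmain, ?_⟩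
  have hEnn : 0 ≤ Real.sqrt 2 * |Real.cos (δ / 2)| / t *
      |2 * Real.cos (δ / (2 * t)) * Real.sin (Real.pi / (2 * t))| /
      |Real.sin ((δ + Real.pi) / (2 * t)) * Real.sin ((δ - Real.pi) / (2 * t))| := by
    positivity
  calc (Real.sqrt 2 * |Real.cos (δ / 2)| / t *
      |2 * Real.cos (δ / (2 * t)) * Real.sin (Real.pi / (2 * t))| /
      |Real.sin ((δ + Real.pi) / (2 * t)) * Real.sin ((δ - Real.pi) / (2 * t))|) ^ 2 ≤
      (8 * Real.pi / δ ^ 2) ^ 2 := by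
        exact pow_le_pow_left₀ hEnn hmain 2
    _ = 64 * Real.pi ^ 2 / δ ^ 4 := by
        have hδne : δ ≠ 0 := hδpos.ne'
        field_simp
        ring
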